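/- There exist a finite alphabet X and a language L ⊆ X* with L ∈ VA(B × B) such that the Parikh image Ψ(L) is not semilinear, where B is the bicyclic monoid. -/

import Mathlib

namespace Paper

/-- Defining relation of the bicyclic monoid: the word `x·x̄` is identified with the
empty word. The generator `x` is `FreeMonoid.of 0`, and `x̄` is `FreeMonoid.of 1`. -/
def BicyclicRel : FreeMonoid (Fin 2) → FreeMonoid (Fin 2) → Prop :=
  fun a b => a = FreeMonoid.of 0 * FreeMonoid.of 1 ∧ b = 1

/-- The bicyclic monoid `B`: the quotient of the free monoid on two generators by the
smallest monoid congruence identifying `x·x̄` with the empty word. -/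
def Bicyclic : Type := (conGen BicyclicRel).Quotient

instance : Monoid Bicyclic := inferInstanceAs (Monoid (conGen BicyclicRel).Quotient)

/-- `VA M L`: the language `L ⊆ X*` is accepted by a valence automaton over the monoid `M`,
via the standard characterization: there are a finite alphabet `Y`, a regular language
`R ⊆ Y*`, and monoid homomorphisms `φ : Y* → M`, `h : Y* → X*` with `L = h(R ∩ φ⁻¹(1))`. -/
def VA (M : Type*) [Monoid M] {X : Type} (L : Language X) : Prop :=
  ∃ (Y : Type) (_ : Fintype Y) (R : Language Y)
    (φ : FreeMonoid Y →* M) (h : FreeMonoid Y →* FreeMonoid X),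
    R.IsRegular ∧
      L = (fun w => FreeMonoid.toList (h w)) ''
            {w : FreeMonoid Y | FreeMonoid.toList w ∈ R ∧ φ w = 1}

open Classical in
/-- The Parikh image of a word: the multiset counting occurrences of each letter. -/
noncomputable def parikh {X : Type} (w : List X) : X → ℕ := fun x => w.count x

/-- A linear subset of `X^⊕`. -/
def IsLinearSet {X : Type} (S : Set (X → ℕ)) : Prop :=
  ∃ (α₀ : X → ℕ) (n : ℕ) (α : Fin n → X → ℕ),
    S = {β | ∃ m : Fin n → ℕ, β = α₀ + ∑ i, m i • α i}

/-- A semilinear subset of `X^⊕`: a finite union of linear sets. -/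
def IsSemilinearSet {X : Type} (S : Set (X → ℕ)) : Prop :=
  ∃ (n : ℕ) (T : Fin n → Set (X → ℕ)), (∀ i, IsLinearSet (T i)) ∧ S = ⋃ i, T i

/-- A language is semilinear if its Parikh image is a semilinear set. -/
def LangSemilinear {X : Type} (L : Language X) : Prop := IsSemilinearSet (parikh '' L)

-- generators
def X1 : Bicyclic := (conGen BicyclicRel).mk' (FreeMonoid.of 0)
def X2 : Bicyclic := (conGen BicyclicRel).mk' (FreeMonoid.of 1)

lemma X1_mul_X2 : X1 * X2 = 1 := by
  show (conGen BicyclicRel).mk' (FreeMonoid.of 0) * (conGen BicyclicRel).mk' (FreeMonoid.of 1) = 1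
  rw [← map_mul, ← map_one (conGen BicyclicRel).mk']
  exact Con.eq _ |>.2 (ConGen.Rel.of _ _ ⟨rfl, rfl⟩)

lemma pow_cancel : ∀ n : ℕ, X1 ^ n * X2 ^ n = 1
  | 0 => by simp
  | n + 1 => by
    have : X1 ^ (n+1) * X2 ^ (n+1) = X1 ^ n * (X1 * X2) * X2 ^ n := by
      rw [pow_succ, pow_succ']; group
    rw [this, X1_mul_X2, mul_one, pow_cancel n]

/-- concrete model of the bicyclic monoid: `⟨d, v⟩` represents `x̄^d x^v`. -/
@[ext] structure BM : Type where
  d : ℕ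
  v : ℕ

def BM.mul (p q : BM) : BM := ⟨p.d + (q.d - p.v), q.v + (p.v - q.d)⟩

lemma BM.mul_assoc' (p q r : BM) : BM.mul (BM.mul p q) r = BM.mul p (BM.mul q r) := by
  obtain ⟨a,b⟩ := p; obtain ⟨c,d⟩ := q; obtain ⟨e,f⟩ := r
  simp only [BM.mul, BM.mk.injEq]
  constructor <;> omega

instance : Monoid BM where
  one := ⟨0, 0⟩
  mul := BM.mul
  mul_assoc := BM.mul_assoc'
  one_mul p := by
    obtain ⟨a,b⟩ := p
    show BM.mul ⟨0,0⟩ _ = _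
    simp only [BM.mul, BM.mk.injEq]
    constructor <;> omega
  mul_one p := by
    obtain ⟨a,b⟩ := p
    show BM.mul _ ⟨0,0⟩ = _
    simp only [BM.mul, BM.mk.injEq]
    constructor <;> omega

lemma BM_mul (p q : BM) : p * q = ⟨p.d + (q.d - p.v), q.v + (p.v - q.d)⟩ := rfl
lemma BM_one : (1 : BM) = ⟨0, 0⟩ := rfl

def fM : FreeMonoid (Fin 2) →* BM :=
  FreeMonoid.lift (fun i => if i = 0 then (⟨0,1⟩ : BM) else (⟨1,0⟩ : BM))

def ψ : Bicyclic →* BM :=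
  Con.lift _ fM (Con.conGen_le.2 (by
    rintro x y ⟨hx, hy⟩
    subst hx; subst hy
    show fM _ = fM _
    simp only [map_mul, map_one, fM, FreeMonoid.lift_eval_of]
    rfl))

lemma ψ_mk (w : FreeMonoid (Fin 2)) : ψ ((conGen BicyclicRel).mk' w) = fM w :=
  Con.lift_mk' _ _

lemma ψ_X1 : ψ X1 = ⟨0, 1⟩ := by rw [X1, ψ_mk]; rfl
lemma ψ_X2 : ψ X2 = ⟨1, 0⟩ := by rw [X2, ψ_mk]; rfl

end Paper

namespace Paper

abbrev Y := Fin 4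

/-- valences of the five letters B, a, t, e -/
def F : Y → Bicyclic × Bicyclic := ![(X1, 1), (X2, X1), (X1, X2), (X2, 1)]

def φv : FreeMonoid Y →* Bicyclic × Bicyclic := FreeMonoid.lift F

def H : Y → FreeMonoid (Fin 2) := ![FreeMonoid.of 1, FreeMonoid.of 0, 1, 1]

def hv : FreeMonoid Y →* FreeMonoid (Fin 2) := FreeMonoid.lift H

def G : Y → BM × BM := ![(⟨0,1⟩, 1), (⟨1,0⟩, ⟨0,1⟩), (⟨0,1⟩, ⟨1,0⟩), (⟨1,0⟩, 1)]

def cval (l : List Y) : BM × BM := (l.map G).prod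

lemma cval_nil : cval [] = 1 := rfl
lemma cval_cons (y : Y) (l : List Y) : cval (y :: l) = G y * cval l := by
  simp [cval]
lemma cval_append (u v : List Y) : cval (u ++ v) = cval u * cval v := by
  simp [cval]

lemma cval_phi (w : FreeMonoid Y) (hw : φv w = 1) : cval (FreeMonoid.toList w) = 1 := by
  have : cval (FreeMonoid.toList w) = (MonoidHom.prodMap ψ ψ).comp φv w := by
    have h2 : (MonoidHom.prodMap ψ ψ).comp φv = FreeMonoid.lift G := by
      apply FreeMonoid.hom_eq
      intro x
      fin_cases x <;>
        simp [φv, FreeMonoid.lift_eval_of, F, G, MonoidHom.prodMap, ψ_X1, ψ_X2]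
    rw [h2, FreeMonoid.lift_apply]
    rfl
  rw [this, MonoidHom.comp_apply, hw, map_one]

lemma BM_mul_def (p q : BM) : p * q = ⟨p.d + (q.d - p.v), q.v + (p.v - q.d)⟩ := rfl

lemma cval_net1 : ∀ l : List Y,
    (cval l).1.v + (l.count 1 + l.count 3) = (cval l).1.d + (l.count 0 + l.count 2)
  | [] => rfl
  | y :: l => by
    have ih := cval_net1 l
    rw [cval_cons]
    fin_cases y <;>
    · simp [List.count_cons, G, Prod.fst_mul, Prod.snd_mul, BM_mul_def]
      omega

lemma cval_net2 : ∀ l : List Y,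
    (cval l).2.v + l.count 2 = (cval l).2.d + l.count 1
  | [] => rfl
  | y :: l => by
    have ih := cval_net2 l
    rw [cval_cons]
    fin_cases y <;>
    · simp [List.count_cons, G, Prod.fst_mul, Prod.snd_mul, BM_mul_def]
      omega

lemma prefix_nonneg {u v : List Y} (h : cval (u ++ v) = 1) :
    (u.count 1 + u.count 3 ≤ u.count 0 + u.count 2) ∧ u.count 2 ≤ u.count 1 := by
  rw [cval_append] at h
  have e1 : ((cval u * cval v).1 : BM) = 1 := by rw [h]; rfl
  have e2 : ((cval u * cval v).2 : BM) = 1 := by rw [h]; rfl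
  rw [Prod.fst_mul, BM_mul_def] at e1
  rw [Prod.snd_mul, BM_mul_def] at e2
  have d1 : (cval u).1.d = 0 := by
    have := congrArg BM.d e1; simp [BM_one] at this; omega
  have d2 : (cval u).2.d = 0 := by
    have := congrArg BM.d e2; simp [BM_one] at this; omega
  have n1 := cval_net1 u
  have n2 := cval_net2 u
  omega


/-- the control automaton -/
def dfaM : DFA Y (Fin 5) where
  step := fun q y => ![![1,4,4,3], ![1,1,2,3], ![1,4,2,3], ![4,4,4,3], ![4,4,4,4]] q y
  start := 0
  accept := {0, 1, 2, 3}

def blockWord (p : ℕ × ℕ) : List Y := 0 :: (List.replicate p.1 1 ++ List.replicate p.2 2)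

def body (l : List (ℕ × ℕ)) : List Y := (l.map blockWord).flatten

lemma body_nil : body [] = [] := rfl
lemma body_cons (p : ℕ × ℕ) (l : List (ℕ × ℕ)) : body (p :: l) = blockWord p ++ body l := rfl
lemma body_append (l₁ l₂ : List (ℕ × ℕ)) : body (l₁ ++ l₂) = body l₁ ++ body l₂ := by
  simp [body]

lemma evalFrom_replicate (n : ℕ) (q : Fin 5) (y : Y) (h : dfaM.step q y = q) :
    dfaM.evalFrom q (List.replicate n y) = q := by
  induction n with
  | zero => rfl
  | succ n ih => rw [List.replicate_succ]
                 show dfaM.evalFrom (dfaM.step q y) (List.replicate n y) = q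
                 rw [h, ih]

lemma evalFrom_block (p : ℕ × ℕ) (s : Fin 5) (hs : s = 0 ∨ s = 1 ∨ s = 2) :
    dfaM.evalFrom s (blockWord p) = 1 ∨ dfaM.evalFrom s (blockWord p) = 2 := by
  obtain ⟨m, r⟩ := p
  have h1 : dfaM.evalFrom s (blockWord (m, r)) =
      dfaM.evalFrom (dfaM.evalFrom (dfaM.step s 0) (List.replicate m 1)) (List.replicate r 2) := by
    simp [blockWord, DFA.evalFrom]
  have hstep : dfaM.step s 0 = 1 := by rcases hs with h|h|h <;> subst h <;> rfl
  rw [h1, hstep, evalFrom_replicate m 1 1 rfl]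
  cases r with
  | zero => left; rfl
  | succ r =>
    right
    rw [List.replicate_succ]
    show dfaM.evalFrom (dfaM.step 1 2) (List.replicate r 2) = 2
    exact evalFrom_replicate r 2 2 rfl

lemma evalFrom_body (l : List (ℕ × ℕ)) (s : Fin 5) (hs : s = 0 ∨ s = 1 ∨ s = 2) :
    dfaM.evalFrom s (body l) = 0 ∨ dfaM.evalFrom s (body l) = 1 ∨ dfaM.evalFrom s (body l) = 2 := by
  induction l generalizing s with
  | nil => exact hs
  | cons p l ih =>
    rw [body_cons, DFA.evalFrom_of_append]
    rcases evalFrom_block p s hs with h|h <;> rw [h]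
    · exact ih 1 (Or.inr (Or.inl rfl))
    · exact ih 2 (Or.inr (Or.inr rfl))

lemma shape_accepted (l : List (ℕ × ℕ)) (z : ℕ) :
    body l ++ List.replicate z 3 ∈ dfaM.accepts := by
  rw [DFA.mem_accepts]
  show dfaM.evalFrom 0 (body l ++ List.replicate z 3) ∈ dfaM.accept
  rw [DFA.evalFrom_of_append]
  have hb := evalFrom_body l 0 (Or.inl rfl)
  cases z with
  | zero =>
    rcases hb with h|h|h <;> rw [h] <;> simp [dfaM]
  | succ z =>
    rw [List.replicate_succ]
    have hstep : ∀ s : Fin 5, s = 0 ∨ s = 1 ∨ s = 2 → dfaM.step s 3 = 3 := by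
      rintro s (h|h|h) <;> subst h <;> rfl
    show dfaM.evalFrom (dfaM.step _ 3) (List.replicate z 3) ∈ dfaM.accept
    rw [hstep _ hb, evalFrom_replicate z 3 3 rfl]
    simp [dfaM]

/-- invariant for the shape lemma. -/
def Inv : Fin 5 → List Y → Prop := fun q w =>
  match q with
  | 0 => w = []
  | 1 => ∃ l m, w = body l ++ [0] ++ List.replicate m 1
  | 2 => ∃ l m r, w = body l ++ [0] ++ List.replicate m 1 ++ List.replicate (r+1) 2
  | 3 => ∃ l z, w = body l ++ List.replicate (z+1) 3
  | 4 => True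

lemma inv_holds (w : List Y) : Inv (dfaM.evalFrom 0 w) w := by
  induction w using List.reverseRecOn with
  | nil => exact rfl
  | append_singleton w y ih =>
    rw [DFA.evalFrom_append_singleton]
    generalize hq : dfaM.evalFrom 0 w = q at ih
    fin_cases q <;> fin_cases y
    -- q = 0
    · show ∃ l m, w ++ [0] = body l ++ [0] ++ List.replicate m 1
      rw [show w = [] from ih]
      exact ⟨[], 0, rfl⟩
    · trivial
    · trivial
    · show ∃ l z, w ++ [3] = body l ++ List.replicate (z+1) 3
      rw [show w = [] from ih]
      exact ⟨[], 0, rfl⟩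
    -- q = 1
    · obtain ⟨l, m, rfl⟩ := ih
      show ∃ l' m', _ ++ [0] = body l' ++ [0] ++ List.replicate m' 1
      refine ⟨l ++ [(m, 0)], 0, ?_⟩
      simp [body_append, body, blockWord]
    · obtain ⟨l, m, rfl⟩ := ih
      show ∃ l' m', _ ++ [1] = body l' ++ [0] ++ List.replicate m' 1
      refine ⟨l, m + 1, ?_⟩
      simp [List.replicate_succ']
    · obtain ⟨l, m, rfl⟩ := ih
      show ∃ l' m' r', _ ++ [2]
          = body l' ++ [0] ++ List.replicate m' 1 ++ List.replicate (r'+1) 2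
      exact ⟨l, m, 0, by simp⟩
    · obtain ⟨l, m, rfl⟩ := ih
      show ∃ l' z', _ ++ [3] = body l' ++ List.replicate (z'+1) 3
      refine ⟨l ++ [(m, 0)], 0, ?_⟩
      simp [body_append, body, blockWord]
    -- q = 2
    · obtain ⟨l, m, r, rfl⟩ := ih
      show ∃ l' m', _ ++ [0] = body l' ++ [0] ++ List.replicate m' 1
      refine ⟨l ++ [(m, r+1)], 0, ?_⟩
      simp [body_append, body, blockWord]
    · trivial
    · obtain ⟨l, m, r, rfl⟩ := ih
      show ∃ l' m' r', _ ++ [2]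
          = body l' ++ [0] ++ List.replicate m' 1 ++ List.replicate (r'+1) 2
      refine ⟨l, m, r + 1, ?_⟩
      simp [List.replicate_succ']
    · obtain ⟨l, m, r, rfl⟩ := ih
      show ∃ l' z', _ ++ [3] = body l' ++ List.replicate (z'+1) 3
      refine ⟨l ++ [(m, r+1)], 0, ?_⟩
      simp [body_append, body, blockWord]
    -- q = 3
    · trivial
    · trivial
    · trivial
    · obtain ⟨l, z, rfl⟩ := ih
      show ∃ l' z', _ ++ [3] = body l' ++ List.replicate (z'+1) 3
      refine ⟨l, z + 1, ?_⟩
      simp [List.replicate_succ']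
    -- q = 4
    · trivial
    · trivial
    · trivial
    · trivial

lemma shape_of_accepted {w : List Y} (hw : w ∈ dfaM.accepts) :
    ∃ l z, w = body l ++ List.replicate z 3 := by
  have hinv := inv_holds w
  have hw' : dfaM.evalFrom 0 w ∈ dfaM.accept := hw
  generalize hq : dfaM.evalFrom 0 w = q at hinv hw'
  fin_cases q
  · exact ⟨[], 0, by rw [show w = [] from hinv]; rfl⟩
  · obtain ⟨l, m, rfl⟩ := hinv
    exact ⟨l ++ [(m, 0)], 0, by simp [body_append, body, blockWord]⟩
  · obtain ⟨l, m, r, rfl⟩ := hinv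
    exact ⟨l ++ [(m, r+1)], 0, by simp [body_append, body, blockWord]⟩
  · obtain ⟨l, z, rfl⟩ := hinv
    exact ⟨l, z + 1, rfl⟩
  · simp [dfaM] at hw'


def sumFst (l : List (ℕ × ℕ)) : ℕ := (l.map Prod.fst).sum
def sumSnd (l : List (ℕ × ℕ)) : ℕ := (l.map Prod.snd).sum

lemma sumFst_append (l₁ l₂ : List (ℕ × ℕ)) : sumFst (l₁ ++ l₂) = sumFst l₁ + sumFst l₂ := by
  simp [sumFst]
lemma sumSnd_append (l₁ l₂ : List (ℕ × ℕ)) : sumSnd (l₁ ++ l₂) = sumSnd l₁ + sumSnd l₂ := by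
  simp [sumSnd]

lemma count_blockWord (p : ℕ × ℕ) :
    (blockWord p).count (0 : Y) = 1 ∧ (blockWord p).count (1 : Y) = p.1 ∧
    (blockWord p).count (2 : Y) = p.2 ∧ (blockWord p).count (3 : Y) = 0 := by
  simp [blockWord, List.count_cons, List.count_replicate]

lemma count_body (l : List (ℕ × ℕ)) :
    (body l).count (0 : Y) = l.length ∧ (body l).count (1 : Y) = sumFst l ∧
    (body l).count (2 : Y) = sumSnd l ∧ (body l).count (3 : Y) = 0 := by
  induction l with
  | nil => simp [body, sumFst, sumSnd]
  | cons p l ih =>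
    obtain ⟨h0, h1, h2, h3⟩ := ih
    obtain ⟨g0, g1, g2, g3⟩ := count_blockWord p
    have sf : sumFst (p :: l) = p.1 + sumFst l := by simp [sumFst]
    have ss : sumSnd (p :: l) = p.2 + sumSnd l := by simp [sumSnd]
    simp only [body_cons, List.count_append, h0, h1, h2, h3, g0, g1, g2, g3,
      List.length_cons]
    exact ⟨by omega, by omega, by omega, trivial⟩

/-- the two prefix inequalities extracted from a valid run -/
lemma split_facts {l : List (ℕ × ℕ)} {z : ℕ}
    (h : cval (body l ++ List.replicate z 3) = 1) :
    ∀ l₁ p l₂, l = l₁ ++ p :: l₂ →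
      sumSnd l₁ ≤ sumFst l₁ ∧ sumFst l₁ + p.1 ≤ l₁.length + 1 + sumSnd l₁ := by
  intro l₁ p l₂ hl
  subst hl
  have hsplit : body (l₁ ++ p :: l₂) ++ List.replicate z 3
      = (body l₁ ++ [0] ++ List.replicate p.1 1) ++
        (List.replicate p.2 2 ++ body l₂ ++ List.replicate z 3) := by
    rw [body_append, body_cons]
    simp [blockWord, List.append_assoc]
  rw [hsplit] at h
  have h1 := prefix_nonneg h
  have hsplit2 : (body l₁ ++ [0] ++ List.replicate p.1 1) ++
        (List.replicate p.2 2 ++ body l₂ ++ List.replicate z 3)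
      = body l₁ ++ ([0] ++ List.replicate p.1 1 ++
        (List.replicate p.2 2 ++ body l₂ ++ List.replicate z 3)) := by
    simp [List.append_assoc]
  rw [hsplit2] at h
  have h2 := prefix_nonneg h
  obtain ⟨c0, c1, c2, c3⟩ := count_body l₁
  simp [List.count_append, c0, c1, c2, c3, List.count_singleton',
    List.count_replicate] at h1 h2
  exact ⟨h2.2, h1.1⟩

/-- the numeric core: prefix inequalities imply the quadratic bound -/
lemma numeric_core : ∀ l : List (ℕ × ℕ),
    (∀ l₁ p l₂, l = l₁ ++ p :: l₂ →
      sumSnd l₁ ≤ sumFst l₁ ∧ sumFst l₁ + p.1 ≤ l₁.length + 1 + sumSnd l₁) →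
    2 * sumFst l ≤ l.length * (l.length + 1) := by
  intro l
  induction l using List.reverseRecOn with
  | nil => intro _; simp [sumFst]
  | append_singleton l p ih =>
    intro hsplit
    have hlast := hsplit l p [] rfl
    have hp : p.1 ≤ l.length + 1 := by omega
    have ihl : 2 * sumFst l ≤ l.length * (l.length + 1) := by
      apply ih
      intro l₁ q l₂ hl
      apply hsplit l₁ q (l₂ ++ [p])
      rw [hl]
      simp [List.append_assoc]
    rw [sumFst_append, List.length_append]
    have hsp : sumFst [p] = p.1 := by simp [sumFst]
    rw [hsp]
    have hl1 : ([p] : List (ℕ × ℕ)).length = 1 := rfl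
    rw [hl1]
    nlinarith [ihl, hp]

/-- counts in the h-image -/
lemma himg_counts : ∀ l : List Y,
    (FreeMonoid.toList (hv (FreeMonoid.ofList l))).count (0 : Fin 2) = l.count 1 ∧
    (FreeMonoid.toList (hv (FreeMonoid.ofList l))).count (1 : Fin 2) = l.count 0 := by
  intro l
  induction l with
  | nil => simp [hv]
  | cons y l ih =>
    rw [FreeMonoid.ofList_cons, map_mul, FreeMonoid.toList_mul]
    fin_cases y <;>
      simp only [List.count_append, List.count_cons, ih.1, ih.2] <;>
      · constructor <;>
        · show (FreeMonoid.toList (hv (FreeMonoid.of _))).count _ + _ = _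
          simp [hv, FreeMonoid.lift_eval_of, H, List.count_cons, List.count_nil] <;> omega

/-- the global soundness bound -/
lemma parikh_bound {w : FreeMonoid Y} (hR : FreeMonoid.toList w ∈ dfaM.accepts)
    (h1 : φv w = 1) :
    2 * (FreeMonoid.toList (hv w)).count (0 : Fin 2) ≤
      (FreeMonoid.toList (hv w)).count (1 : Fin 2) *
        ((FreeMonoid.toList (hv w)).count (1 : Fin 2) + 1) := by
  obtain ⟨l, z, hw⟩ := shape_of_accepted hR
  have hc := cval_phi w h1
  rw [hw] at hc
  have hbound := numeric_core l (split_facts hc)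
  have hcounts := himg_counts (FreeMonoid.toList w)
  rw [FreeMonoid.ofList_toList] at hcounts
  obtain ⟨c0, c1, c2, c3⟩ := count_body l
  rw [hcounts.1, hcounts.2, hw]
  simp only [List.count_append, c0, c1, List.count_replicate]
  simpa using hbound


def witL (k : ℕ) : List (ℕ × ℕ) := (List.range k).map (fun i => (i+1, i+1))

def witW (k : ℕ) : List Y := body (witL k) ++ List.replicate k 3

lemma witL_succ (k : ℕ) : witL (k+1) = witL k ++ [(k+1, k+1)] := by
  simp [witL, List.range_succ]

def φ1 : FreeMonoid Y →* Bicyclic := FreeMonoid.lift (fun y => (F y).1)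
def φ2 : FreeMonoid Y →* Bicyclic := FreeMonoid.lift (fun y => (F y).2)

lemma φv_eq : φv = φ1.prod φ2 := by
  apply FreeMonoid.hom_eq
  intro y
  show F y = ((F y).1, (F y).2)
  rfl

lemma φ1_replicate (n : ℕ) (y : Y) :
    φ1 (FreeMonoid.ofList (List.replicate n y)) = ((F y).1) ^ n := by
  rw [φ1, FreeMonoid.lift_ofList, List.map_replicate, List.prod_replicate]

lemma φ2_replicate (n : ℕ) (y : Y) :
    φ2 (FreeMonoid.ofList (List.replicate n y)) = ((F y).2) ^ n := by
  rw [φ2, FreeMonoid.lift_ofList, List.map_replicate, List.prod_replicate]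

lemma φ1_block (p : ℕ × ℕ) :
    φ1 (FreeMonoid.ofList (blockWord p)) = X1 * (X2 ^ p.1 * X1 ^ p.2) := by
  rw [blockWord, FreeMonoid.ofList_cons, map_mul, FreeMonoid.ofList_append, map_mul,
    φ1_replicate, φ1_replicate]
  show (F 0).1 * _ = _
  simp [F]

lemma φ2_block (p : ℕ × ℕ) :
    φ2 (FreeMonoid.ofList (blockWord p)) = X1 ^ p.1 * X2 ^ p.2 := by
  rw [blockWord, FreeMonoid.ofList_cons, map_mul, FreeMonoid.ofList_append, map_mul,
    φ2_replicate, φ2_replicate]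
  show (F 0).2 * _ = _
  simp [F]

lemma φ1_body_wit : ∀ k : ℕ, φ1 (FreeMonoid.ofList (body (witL k))) = X1 ^ k
  | 0 => by simp [witL, body]
  | k + 1 => by
    rw [witL_succ, body_append, FreeMonoid.ofList_append, map_mul, φ1_body_wit k]
    have : body [((k+1 : ℕ), (k+1 : ℕ))] = blockWord (k+1, k+1) := by simp [body]
    rw [this, φ1_block]
    show X1 ^ k * (X1 * (X2 ^ (k+1) * X1 ^ (k+1))) = X1 ^ (k+1)
    rw [← mul_assoc, ← pow_succ, ← mul_assoc, pow_cancel, one_mul]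

lemma φ2_body_wit : ∀ k : ℕ, φ2 (FreeMonoid.ofList (body (witL k))) = 1
  | 0 => by simp [witL, body]
  | k + 1 => by
    rw [witL_succ, body_append, FreeMonoid.ofList_append, map_mul, φ2_body_wit k]
    have : body [((k+1 : ℕ), (k+1 : ℕ))] = blockWord (k+1, k+1) := by simp [body]
    rw [this, φ2_block]
    show (1 : Bicyclic) * (X1 ^ (k+1) * X2 ^ (k+1)) = 1
    rw [one_mul, pow_cancel]

lemma φv_wit (k : ℕ) : φv (FreeMonoid.ofList (witW k)) = 1 := by
  rw [φv_eq]
  have h1 : φ1 (FreeMonoid.ofList (witW k)) = 1 := by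
    rw [witW, FreeMonoid.ofList_append, map_mul, φ1_body_wit, φ1_replicate]
    show X1 ^ k * (F 3).1 ^ k = 1
    have : (F 3).1 = X2 := rfl
    rw [this, pow_cancel]
  have h2 : φ2 (FreeMonoid.ofList (witW k)) = 1 := by
    rw [witW, FreeMonoid.ofList_append, map_mul, φ2_body_wit, φ2_replicate]
    show (1 : Bicyclic) * (F 3).2 ^ k = 1
    have : (F 3).2 = (1 : Bicyclic) := rfl
    rw [this, one_pow, one_mul]
  show (φ1 _, φ2 _) = 1
  rw [h1, h2]
  rfl

lemma witW_accepted (k : ℕ) : witW k ∈ dfaM.accepts := shape_accepted (witL k) k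

def Gk (k : ℕ) : ℕ := sumFst (witL k)

lemma Gk_succ (k : ℕ) : Gk (k+1) = Gk k + (k+1) := by
  rw [Gk, witL_succ, sumFst_append]
  simp [sumFst, Gk]

lemma two_Gk : ∀ k : ℕ, 2 * Gk k = k * (k+1)
  | 0 => rfl
  | k + 1 => by
    have ih := two_Gk k
    rw [Gk_succ]
    nlinarith [ih]

lemma wit_counts (k : ℕ) :
    (FreeMonoid.toList (hv (FreeMonoid.ofList (witW k)))).count (0 : Fin 2) = Gk k ∧
    (FreeMonoid.toList (hv (FreeMonoid.ofList (witW k)))).count (1 : Fin 2) = k := by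
  obtain ⟨h0, h1⟩ := himg_counts (witW k)
  obtain ⟨c0, c1, c2, c3⟩ := count_body (witL k)
  have hlen : (witL k).length = k := by simp [witL]
  constructor
  · rw [h0, witW, List.count_append, c1, List.count_replicate]
    simp [Gk]
  · rw [h1, witW, List.count_append, c0, List.count_replicate, hlen]
    simp


lemma parikh_apply (w : List (Fin 2)) (x : Fin 2) : parikh w x = w.count x := by
  unfold parikh
  congr 1
  exact congrArg (fun d : DecidableEq (Fin 2) => @instBEqOfDecidableEq (Fin 2) d)
    (Subsingleton.elim _ _)

/-- the language -/
def Ldef : Language (Fin 2) :=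
  (fun w => FreeMonoid.toList (hv w)) ''
    {w : FreeMonoid Y | FreeMonoid.toList w ∈ dfaM.accepts ∧ φv w = 1}

/-- the target points -/
def qk (k : ℕ) : Fin 2 → ℕ := fun x => if x = 0 then Gk k else k

lemma qk_mem (k : ℕ) : qk k ∈ parikh '' Ldef := by
  refine ⟨FreeMonoid.toList (hv (FreeMonoid.ofList (witW k))),
    ⟨FreeMonoid.ofList (witW k), ⟨witW_accepted k, φv_wit k⟩, rfl⟩, ?_⟩
  funext x
  obtain ⟨c0, c1⟩ := wit_counts k
  fin_cases x
  · rw [parikh_apply]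
    show List.count (0 : Fin 2) (FreeMonoid.toList (hv (FreeMonoid.ofList (witW k)))) = qk k 0
    rw [c0]; simp [qk]
  · rw [parikh_apply]
    show List.count (1 : Fin 2) (FreeMonoid.toList (hv (FreeMonoid.ofList (witW k)))) = qk k 1
    rw [c1]; simp [qk]

lemma mem_S_bound : ∀ g ∈ parikh '' Ldef, 2 * g 0 ≤ g 1 * (g 1 + 1) := by
  rintro g ⟨u, ⟨w, ⟨hR, hφ⟩, rfl⟩, rfl⟩
  rw [parikh_apply, parikh_apply]
  exact parikh_bound hR hφ

lemma not_semilinear : ¬ IsSemilinearSet (parikh '' Ldef) := by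
  rintro ⟨n, T, hlin, hS⟩
  -- pigeonhole: some T i contains infinitely many target points
  have hcover : (Set.univ : Set ℕ) ⊆ ⋃ i, {k | qk k ∈ T i} := by
    intro k _
    have hk : qk k ∈ ⋃ i, T i := hS ▸ qk_mem k
    rw [Set.mem_iUnion] at hk ⊢
    exact hk
  have hex : ∃ i, {k | qk k ∈ T i}.Infinite := by
    by_contra hcon
    push_neg at hcon
    exact Set.infinite_univ (Set.Finite.subset (Set.finite_iUnion hcon) hcover)
  obtain ⟨i, hKinf⟩ := hex
  obtain ⟨α0, N, α, hT⟩ := hlin i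
  have hTS : T i ⊆ parikh '' Ldef := hS ▸ Set.subset_iUnion T i
  have hbound : ∀ β ∈ T i, 2 * β 0 ≤ β 1 * (β 1 + 1) := fun β hb => mem_S_bound β (hTS hb)
  -- closure under adding a generator
  have hadd : ∀ β ∈ T i, ∀ j : Fin N, β + α j ∈ T i := by
    intro β hβ j
    rw [hT] at hβ ⊢
    obtain ⟨m, rfl⟩ := hβ
    refine ⟨fun i' => if i' = j then m i' + 1 else m i', ?_⟩
    have hsum : (∑ i', (if i' = j then m i' + 1 else m i') • α i')
        = (∑ i', m i' • α i') + α j := by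
      have hterm : ∀ i' : Fin N, (if i' = j then m i' + 1 else m i') • α i'
          = m i' • α i' + (if i' = j then α j else 0) := by
        intro i'
        by_cases h : i' = j
        · subst h; simp [add_smul]
        · simp [h]
      rw [Finset.sum_congr rfl (fun i' _ => hterm i'), Finset.sum_add_distrib,
        Finset.sum_ite_eq' Finset.univ j (fun _ => α j)]
      simp
    rw [hsum, add_assoc]
  -- a point in T i
  obtain ⟨k0, hk0⟩ := hKinf.nonempty
  -- a generator with zero second coordinate has zero first coordinate
  have gen_prop : ∀ j : Fin N, α j 1 = 0 → α j 0 = 0 := by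
    intro j hj1
    have h2 : qk k0 + α j ∈ T i := hadd _ hk0 j
    have b2 := hbound _ h2
    have b1 : qk k0 0 = Gk k0 := if_pos rfl
    have b0 : qk k0 1 = k0 := by simp [qk]
    simp only [Pi.add_apply, b1, b0, hj1, add_zero] at b2
    have h2G : 2 * Gk k0 = k0 * (k0 + 1) := two_Gk k0
    generalize k0 * (k0 + 1) = A at b2 h2G
    omega
  -- linear growth bound on T i
  set P : ℕ := ∑ j : Fin N, α j 0 with hP
  have hPj : ∀ j : Fin N, α j 0 ≤ P * α j 1 := by
    intro j
    by_cases hj : α j 1 = 0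
    · rw [gen_prop j hj]
      exact Nat.zero_le _
    · have h1 : 1 ≤ α j 1 := Nat.one_le_iff_ne_zero.2 hj
      have h0 : α j 0 ≤ P := by
        rw [hP]
        exact Finset.single_le_sum (f := fun j : Fin N => α j 0)
          (fun _ _ => Nat.zero_le _) (Finset.mem_univ j)
      calc α j 0 ≤ P := h0
        _ = P * 1 := (mul_one P).symm
        _ ≤ P * α j 1 := Nat.mul_le_mul_left P h1
  have hlinear : ∀ β ∈ T i, β 0 ≤ α0 0 + P * β 1 := by
    intro β hβ
    rw [hT] at hβ
    obtain ⟨m, rfl⟩ := hβ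
    have e0 : (α0 + ∑ j, m j • α j) 0 = α0 0 + ∑ j, m j * α j 0 := by
      simp [Finset.sum_apply]
    have e1 : (α0 + ∑ j, m j • α j) 1 = α0 1 + ∑ j, m j * α j 1 := by
      simp [Finset.sum_apply]
    rw [e0, e1]
    have hs : (∑ j, m j * α j 0) ≤ P * ∑ j, m j * α j 1 := by
      rw [Finset.mul_sum]
      refine Finset.sum_le_sum fun j _ => ?_
      calc m j * α j 0 ≤ m j * (P * α j 1) := Nat.mul_le_mul_left (m j) (hPj j)
        _ = P * (m j * α j 1) := by ring
    calc α0 0 + ∑ j, m j * α j 0 ≤ α0 0 + P * ∑ j, m j * α j 1 := by omega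
      _ ≤ α0 0 + P * (α0 1 + ∑ j, m j * α j 1) := by
          have := Nat.mul_le_mul_left P (Nat.le_add_left (∑ j, m j * α j 1) (α0 1))
          omega
  -- a large point gives a contradiction
  obtain ⟨k, hkK, hklarge⟩ := hKinf.exists_gt (2 * α0 0 + 2 * P)
  have hql := hlinear _ hkK
  have b1 : qk k 0 = Gk k := if_pos rfl
  have b0 : qk k 1 = k := by simp [qk]
  rw [b1, b0] at hql
  -- so k * (k+1) = 2 * Gk k ≤ 2 * α0 0 + 2 * P * k, contradiction
  have h2G : 2 * Gk k = k * (k + 1) := two_Gk k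
  have hfin : k * (k + 1) ≤ 2 * α0 0 + 2 * (P * k) := by omega
  have hk1 : 1 ≤ k := by omega
  nlinarith [hfin, hklarge, hk1]

/-- `VA (B × B)` contains a language with non-semilinear Parikh image,
where `B` is the bicyclic monoid. -/
theorem stmt12 :
    ∃ (X : Type) (_ : Fintype X) (L : Language X),
      VA (Bicyclic × Bicyclic) L ∧ ¬ IsSemilinearSet (parikh '' L) := by
  refine ⟨Fin 2, inferInstance, Ldef, ?_, not_semilinear⟩
  exact ⟨Y, inferInstance, dfaM.accepts, φv, hv,
    ⟨Fin 5, inferInstance, dfaM, rfl⟩, rfl⟩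

end Paper
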